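/- Let V be a 4-dimensional oriented real inner product space and let J, K be orthogonal complex structures on V (J² = K² = −Id, both orthogonal) whose associated 2-forms ω_J, ω_K are both self-dual. Then JK + KJ = −2⟨J,K⟩ Id, where ⟨J,K⟩ = (1/4)trace(J K*) = −(1/4)trace(JK). -/

import Mathlib

open Matrix

/-- The Levi-Civita symbol on `Fin 4`, as the determinant of the matrix of standard basis
vectors. -/
noncomputable def eps4 (i j k l : Fin 4) : ℝ :=
  Matrix.det (Matrix.of ![(Pi.single i 1 : Fin 4 → ℝ), Pi.single j 1,
    Pi.single k 1, Pi.single l 1])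

/-- The Hodge star operator on 2-forms on the oriented Euclidean space `ℝ⁴`, with 2-forms
identified with their component matrices `M i j = ω(eᵢ, eⱼ)`:
`(*ω)ᵢⱼ = (1/2) εᵢⱼₖₗ ωₖₗ`. -/
noncomputable def hodgeStar2 : Matrix (Fin 4) (Fin 4) ℝ →ₗ[ℝ] Matrix (Fin 4) (Fin 4) ℝ where
  toFun M := Matrix.of fun i j => (1 / 2) * ∑ k, ∑ l, eps4 i j k l * M k l
  map_add' M N := by
    funext i j
    simp only [Matrix.of_apply, Matrix.add_apply, mul_add, Finset.sum_add_distrib]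
  map_smul' c M := by
    funext i j
    simp only [Matrix.of_apply, Matrix.smul_apply, smul_eq_mul, RingHom.id_apply,
      Finset.mul_sum]
    congr 1
    ext k
    congr 1
    ext l
    ring


section epsvals

private lemma eps4_12 (i k l : Fin 4) : eps4 i i k l = 0 :=
  Matrix.det_zero_of_row_eq (i := (0 : Fin 4)) (j := 1) (by decide) rfl
private lemma eps4_13 (i j l : Fin 4) : eps4 i j i l = 0 :=
  Matrix.det_zero_of_row_eq (i := (0 : Fin 4)) (j := 2) (by decide) rfl
private lemma eps4_14 (i j k : Fin 4) : eps4 i j k i = 0 :=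
  Matrix.det_zero_of_row_eq (i := (0 : Fin 4)) (j := 3) (by decide) rfl
private lemma eps4_23 (i j l : Fin 4) : eps4 i j j l = 0 :=
  Matrix.det_zero_of_row_eq (i := (1 : Fin 4)) (j := 2) (by decide) rfl
private lemma eps4_24 (i j k : Fin 4) : eps4 i j k j = 0 :=
  Matrix.det_zero_of_row_eq (i := (1 : Fin 4)) (j := 3) (by decide) rfl
private lemma eps4_34 (i j k : Fin 4) : eps4 i j k k = 0 :=
  Matrix.det_zero_of_row_eq (i := (2 : Fin 4)) (j := 3) (by decide) rfl

private lemma eps4_0123 : eps4 0 1 2 3 = 1 := by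
  rw [eps4, Matrix.det_succ_row_zero]
  simp [Fin.sum_univ_succ, Matrix.det_fin_three, Pi.single_apply, Matrix.submatrix_apply, Fin.succAbove]
private lemma eps4_0132 : eps4 0 1 3 2 = -1 := by
  rw [eps4, Matrix.det_succ_row_zero]
  simp [Fin.sum_univ_succ, Matrix.det_fin_three, Pi.single_apply, Matrix.submatrix_apply, Fin.succAbove]
private lemma eps4_0213 : eps4 0 2 1 3 = -1 := by
  rw [eps4, Matrix.det_succ_row_zero]
  simp [Fin.sum_univ_succ, Matrix.det_fin_three, Pi.single_apply, Matrix.submatrix_apply, Fin.succAbove]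
private lemma eps4_0231 : eps4 0 2 3 1 = 1 := by
  rw [eps4, Matrix.det_succ_row_zero]
  simp [Fin.sum_univ_succ, Matrix.det_fin_three, Pi.single_apply, Matrix.submatrix_apply, Fin.succAbove]
private lemma eps4_0312 : eps4 0 3 1 2 = 1 := by
  rw [eps4, Matrix.det_succ_row_zero]
  simp [Fin.sum_univ_succ, Matrix.det_fin_three, Pi.single_apply, Matrix.submatrix_apply, Fin.succAbove]
private lemma eps4_0321 : eps4 0 3 2 1 = -1 := by
  rw [eps4, Matrix.det_succ_row_zero]
  simp [Fin.sum_univ_succ, Matrix.det_fin_three, Pi.single_apply, Matrix.submatrix_apply, Fin.succAbove]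

end epsvals

private lemma hodge01 (M : Matrix (Fin 4) (Fin 4) ℝ) :
    hodgeStar2 M 0 1 = (M 2 3 - M 3 2) / 2 := by
  show (1 / 2 : ℝ) * ∑ k, ∑ l, eps4 0 1 k l * M k l = _
  simp only [Fin.sum_univ_four, eps4_12, eps4_13, eps4_14, eps4_23, eps4_24, eps4_34,
    eps4_0123, eps4_0132, zero_mul]
  ring

private lemma hodge02 (M : Matrix (Fin 4) (Fin 4) ℝ) :
    hodgeStar2 M 0 2 = (M 3 1 - M 1 3) / 2 := by
  show (1 / 2 : ℝ) * ∑ k, ∑ l, eps4 0 2 k l * M k l = _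
  simp only [Fin.sum_univ_four, eps4_12, eps4_13, eps4_14, eps4_23, eps4_24, eps4_34,
    eps4_0213, eps4_0231, zero_mul]
  ring

private lemma hodge03 (M : Matrix (Fin 4) (Fin 4) ℝ) :
    hodgeStar2 M 0 3 = (M 1 2 - M 2 1) / 2 := by
  show (1 / 2 : ℝ) * ∑ k, ∑ l, eps4 0 3 k l * M k l = _
  simp only [Fin.sum_univ_four, eps4_12, eps4_13, eps4_14, eps4_23, eps4_24, eps4_34,
    eps4_0312, eps4_0321, zero_mul]
  ring

/-- skew: Jᵀ = -J -/
private lemma skew_of (J : Matrix (Fin 4) (Fin 4) ℝ) (hJo : Jᵀ * J = 1) (hJ2 : J * J = -1) :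
    ∀ i j, J j i = -J i j := by
  have h : Jᵀ * (J * J) = -Jᵀ := by rw [hJ2]; simp
  rw [← mul_assoc, hJo, one_mul] at h
  intro i j
  have := congrFun (congrFun h j) i
  simp only [Matrix.neg_apply, Matrix.transpose_apply] at this
  linarith


set_option maxHeartbeats 1000000 in
/-- Let `J`, `K` be orthogonal complex structures on the 4-dimensional oriented Euclidean
space `ℝ⁴` whose associated 2-forms (with component matrices `Jᵀ`, `Kᵀ`) are both self-dual.
Then `JK + KJ = -2⟨J, K⟩ Id`, where `⟨J, K⟩ = -(1/4) trace (JK)`. -/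
theorem selfDual_complexStructures_anticommutator
    (J K : Matrix (Fin 4) (Fin 4) ℝ)
    (hJo : Jᵀ * J = 1) (hJ2 : J * J = -1)
    (hKo : Kᵀ * K = 1) (hK2 : K * K = -1)
    (hJsd : hodgeStar2 Jᵀ = Jᵀ) (hKsd : hodgeStar2 Kᵀ = Kᵀ) :
    J * K + K * J = (-2 * (-(1 / 4) * Matrix.trace (J * K))) • (1 : Matrix (Fin 4) (Fin 4) ℝ) := by
  have sJ := skew_of J hJo hJ2
  have sK := skew_of K hKo hK2
  -- self-duality relations for J
  have hJ1 : J 3 2 = J 1 0 := by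
    have h := congrFun (congrFun hJsd 0) 1
    rw [hodge01] at h
    simp only [Matrix.transpose_apply] at h
    have := sJ 3 2
    linarith
  have hJ2' : J 1 3 = J 2 0 := by
    have h := congrFun (congrFun hJsd 0) 2
    rw [hodge02] at h
    simp only [Matrix.transpose_apply] at h
    have := sJ 1 3
    linarith
  have hJ3 : J 2 1 = J 3 0 := by
    have h := congrFun (congrFun hJsd 0) 3
    rw [hodge03] at h
    simp only [Matrix.transpose_apply] at h
    have := sJ 2 1
    linarith
  have hK1 : K 3 2 = K 1 0 := by
    have h := congrFun (congrFun hKsd 0) 1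
    rw [hodge01] at h
    simp only [Matrix.transpose_apply] at h
    have := sK 3 2
    linarith
  have hK2' : K 1 3 = K 2 0 := by
    have h := congrFun (congrFun hKsd 0) 2
    rw [hodge02] at h
    simp only [Matrix.transpose_apply] at h
    have := sK 1 3
    linarith
  have hK3 : K 2 1 = K 3 0 := by
    have h := congrFun (congrFun hKsd 0) 3
    rw [hodge03] at h
    simp only [Matrix.transpose_apply] at h
    have := sK 2 1
    linarith
  -- canonical entry values
  have jd0 : J 0 0 = 0 := by have := sJ 0 0; linarith
  have jd1 : J 1 1 = 0 := by have := sJ 1 1; linarith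
  have jd2 : J 2 2 = 0 := by have := sJ 2 2; linarith
  have jd3 : J 3 3 = 0 := by have := sJ 3 3; linarith
  have kd0 : K 0 0 = 0 := by have := sK 0 0; linarith
  have kd1 : K 1 1 = 0 := by have := sK 1 1; linarith
  have kd2 : K 2 2 = 0 := by have := sK 2 2; linarith
  have kd3 : K 3 3 = 0 := by have := sK 3 3; linarith
  have j01 : J 0 1 = -J 1 0 := sJ 1 0
  have j02 : J 0 2 = -J 2 0 := sJ 2 0
  have j03 : J 0 3 = -J 3 0 := sJ 3 0
  have j12 : J 1 2 = -J 3 0 := by have := sJ 2 1; rw [hJ3] at this; linarith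
  have j31 : J 3 1 = -J 2 0 := by have := sJ 1 3; rw [hJ2'] at this; linarith
  have j23 : J 2 3 = -J 1 0 := by have := sJ 3 2; rw [hJ1] at this; linarith
  have k01 : K 0 1 = -K 1 0 := sK 1 0
  have k02 : K 0 2 = -K 2 0 := sK 2 0
  have k03 : K 0 3 = -K 3 0 := sK 3 0
  have k12 : K 1 2 = -K 3 0 := by have := sK 2 1; rw [hK3] at this; linarith
  have k31 : K 3 1 = -K 2 0 := by have := sK 1 3; rw [hK2'] at this; linarith
  have k23 : K 2 3 = -K 1 0 := by have := sK 3 2; rw [hK1] at this; linarith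
  set a := J 1 0 with ha
  set b := J 2 0 with hb
  set c := J 3 0 with hc
  set a' := K 1 0 with ha'
  set b' := K 2 0 with hb'
  set c' := K 3 0 with hc'
  have hJm : J = !![0,-a,-b,-c; a,0,-c,b; b,c,0,-a; c,-b,a,0] := by
    ext i j
    fin_cases i <;> fin_cases j <;>
      first
        | exact jd0 | exact jd1 | exact jd2 | exact jd3
        | exact j01 | exact j02 | exact j03 | exact j12 | exact j31 | exact j23
        | exact hJ1 | exact hJ2' | exact hJ3 | rfl
  have hKm : K = !![0,-a',-b',-c'; a',0,-c',b'; b',c',0,-a'; c',-b',a',0] := by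
    ext i j
    fin_cases i <;> fin_cases j <;>
      first
        | exact kd0 | exact kd1 | exact kd2 | exact kd3
        | exact k01 | exact k02 | exact k03 | exact k12 | exact k31 | exact k23
        | exact hK1 | exact hK2' | exact hK3 | rfl
  have htr : Matrix.trace (J * K) = -4 * (a * a' + b * b' + c * c') := by
    rw [hJm, hKm]
    simp [Matrix.trace, Matrix.diag, Matrix.mul_apply, Fin.sum_univ_four]
    ring
  rw [htr, hJm, hKm]
  ext i j
  fin_cases i <;> fin_cases j <;>
    simp [Matrix.mul_apply, Fin.sum_univ_four, Matrix.one_apply, Matrix.smul_apply] <;>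
    ring
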